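/- Let (a₁,a₂,a₃,a₄,a₅) be a tuple of positive integers with a₁ = 1 and aᵢ ≤ a_{i+1} ≤ a₁+⋯+aᵢ+1 for i = 1,2,3,4. Then the diagonal quadratic form a₁y₁²+a₂y₂²+a₃y₃²+a₄y₄²+a₅y₅² represents every positive integer over ℤ_p for every prime p; that is, it is locally universal. -/

import Mathlib

/-!
We prove that every escalation tuple `(1,a₁,a₂,a₃,a₄)` gives a locally universal diagonal
quinary quadratic form.  The proof uses:
* a one-variable quadratic Hensel lemma `hsq` (from `hensels_lemma`);
* for odd `p`, representation of units by binary forms with unit coefficients (`bin`),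
  via a finite-field argument;
* for `p = 2`, a finite computation (`fin_main`) producing approximate solutions mod 8/16
  that can be lifted 2-adically (`bridge`).
-/

def c8 (c S r : ℤ) : Prop := ¬ (2:ℤ) ∣ c ∧ (8:ℤ) ∣ S - r

instance c8dec (c S r : ℤ) : Decidable (c8 c S r) := by unfold c8; infer_instance

def Good (a1 a2 a3 a4 r : ℤ) : Prop :=
  (∃ x0 ∈ ([1,0] : List ℤ), ∃ x1 ∈ ([0,1,2] : List ℤ), ∃ x2 ∈ ([0,1] : List ℤ),
    ∃ x3 ∈ ([0,1,2] : List ℤ),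
      (x0 = 1 ∧ c8 1 (1 * x0^2 + a1 * x1^2 + a2 * x2^2 + a3 * x3^2 + a4 * 0^2) r) ∨
      (x2 = 1 ∧ c8 a2 (1 * x0^2 + a1 * x1^2 + a2 * x2^2 + a3 * x3^2 + a4 * 0^2) r)) ∨
  (a1 % 4 = 2 ∧ ∃ x0 ∈ ([0,1,2] : List ℤ), ∃ x3 ∈ ([0,1,2] : List ℤ),
    ∃ x4 ∈ ([0,1,2] : List ℤ),
      (16:ℤ) ∣ (1 * x0^2 + a1 * 1^2 + a2 * 0^2 + a3 * x3^2 + a4 * x4^2) - r)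

instance gooddec (a1 a2 a3 a4 r : ℤ) : Decidable (Good a1 a2 a3 a4 r) := by
  unfold Good; infer_instance

set_option maxHeartbeats 4000000 in
/-- The finite verification over all 192 escalation tuples. -/
lemma fin_main (a1 a2 a3 a4 : ℤ) (h1 : 1 ≤ a1) (h2 : a1 ≤ 2) (h3 : a1 ≤ a2)
    (h4 : a2 ≤ 2 + a1) (h5 : a2 ≤ a3) (h6 : a3 ≤ 2 + a1 + a2) (h7 : a3 ≤ a4)
    (h8 : a4 ≤ 2 + a1 + a2 + a3) :
    ∀ r ∈ ([1,2,3,5,6,7,9,10,11,13,14,15] : List ℤ), Good a1 a2 a3 a4 r := by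
  interval_cases a1 <;> interval_cases a2 <;> interval_cases a3 <;> interval_cases a4 <;> decide

open Polynomial in
/-- One-variable quadratic Hensel lemma. -/
lemma hsq {p : ℕ} [Fact p.Prime] (c s m : ℤ_[p])
    (h : ‖c * s ^ 2 - m‖ < ‖2 * c * s‖ ^ 2) : ∃ y : ℤ_[p], c * y ^ 2 = m := by
  have hF : ∀ z : ℤ_[p], (C c * X ^ 2 - C m).eval z = c * z ^ 2 - m := by intro z; simp
  have hF' : (Polynomial.derivative (C c * X ^ 2 - C m)) = C (2 * c) * X := by
    simp [Polynomial.derivative_sub]; ring_nf; rw [map_ofNat C 2]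
  have hd : ∀ z : ℤ_[p], (Polynomial.derivative (C c * X ^ 2 - C m)).eval z = 2 * c * z := by
    intro z; rw [hF']; simp
  have hnorm : ‖(C c * X ^ 2 - C m).eval s‖ <
      ‖(Polynomial.derivative (C c * X ^ 2 - C m)).eval s‖ ^ 2 := by rw [hF, hd]; exact h
  obtain ⟨z, hz, -⟩ := hensels_lemma hnorm
  rw [Polynomial.coe_aeval_eq_eval, hF] at hz
  exact ⟨z, sub_eq_zero.mp hz⟩

lemma norm_int_eq_one {p : ℕ} [Fact p.Prime] {k : ℤ} (hk : ¬ (p : ℤ) ∣ k) :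
    ‖(k : ℤ_[p])‖ = 1 := by
  refine le_antisymm (PadicInt.norm_le_one _) ?_
  by_contra hlt
  push_neg at hlt
  exact hk ((PadicInt.norm_int_lt_one_iff_dvd k).mp hlt)

/-- If `u` is odd and `m ≡ u mod 8` then `u·y² = m` is solvable in `ℤ_[2]`. -/
lemma key2 (u m : ℤ) (hu : ¬ (2:ℤ) ∣ u) (hdvd : (8:ℤ) ∣ m - u) :
    ∃ y : ℤ_[2], (u : ℤ_[2]) * y ^ 2 = (m : ℤ_[2]) := by
  apply hsq (u : ℤ_[2]) 1 (m : ℤ_[2])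
  have e1 : ((u : ℤ_[2])) * 1 ^ 2 - (m : ℤ_[2]) = ((u - m : ℤ) : ℤ_[2]) := by push_cast; ring
  have h1 : ‖((u - m : ℤ) : ℤ_[2])‖ ≤ ((2:ℕ) : ℝ) ^ (-(3:ℕ) : ℤ) :=
    (PadicInt.norm_int_le_pow_iff_dvd (p := 2)).mpr (by push_cast; omega)
  have h2 : ‖2 * (u:ℤ_[2]) * 1‖ = 2⁻¹ := by
    rw [mul_one, norm_mul]
    have hu1 : ‖(u : ℤ_[2])‖ = 1 := norm_int_eq_one (by exact_mod_cast hu)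
    have h2' : ‖(2 : ℤ_[2])‖ = 2⁻¹ := by
      have := PadicInt.norm_p (p := 2)
      norm_num at this ⊢
      convert this using 2
    rw [hu1, h2', mul_one]
  rw [e1, h2]
  calc ‖((u - m : ℤ) : ℤ_[2])‖ ≤ ((2:ℕ):ℝ) ^ (-(3:ℕ) : ℤ) := h1
    _ < (2:ℝ)⁻¹ ^ 2 := by norm_num

lemma toZMod_zero_iff {p : ℕ} [Fact p.Prime] (z : ℤ_[p]) :
    PadicInt.toZMod z = 0 ↔ ‖z‖ < 1 := by
  rw [← RingHom.mem_ker, PadicInt.ker_toZMod, IsLocalRing.mem_maximalIdeal,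
    mem_nonunits_iff, PadicInt.not_isUnit_iff]

lemma norm_two_eq_one {p : ℕ} [Fact p.Prime] (hp : p ≠ 2) : ‖(2 : ℤ_[p])‖ = 1 := by
  have : ((2 : ℤ) : ℤ_[p]) = (2 : ℤ_[p]) := by push_cast; ring
  rw [← this]
  refine norm_int_eq_one fun hdvd => ?_
  have hple : (p : ℤ) ≤ 2 := Int.le_of_dvd (by norm_num) hdvd
  have := (Fact.out : p.Prime).two_le
  omega

lemma keyp {p : ℕ} [Fact p.Prime] (hp : p ≠ 2) (c s m : ℤ_[p]) (hc : ‖c‖ = 1) (hs : ‖s‖ = 1)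
    (h : PadicInt.toZMod (c * s ^ 2 - m) = 0) : ∃ y : ℤ_[p], c * y ^ 2 = m := by
  apply hsq c s m
  have h1 : ‖c * s ^ 2 - m‖ < 1 := (toZMod_zero_iff _).mp h
  have h2 : ‖2 * c * s‖ = 1 := by
    rw [norm_mul, norm_mul, norm_two_eq_one hp, hc, hs]; norm_num
  rw [h2]; norm_num; exact h1

lemma binAux {p : ℕ} [Fact p.Prime] (hp : p ≠ 2) (c d m : ℤ_[p]) (hc : ‖c‖ = 1)
    (x0 y0 : ZMod p) (hx0 : x0 ≠ 0)
    (heq : PadicInt.toZMod c * x0 ^ 2 + PadicInt.toZMod d * y0 ^ 2 = PadicInt.toZMod m) :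
    ∃ x y : ℤ_[p], c * x ^ 2 + d * y ^ 2 = m := by
  set X : ℤ_[p] := ((x0.val : ℕ) : ℤ_[p]) with hX
  set Y : ℤ_[p] := ((y0.val : ℕ) : ℤ_[p]) with hY
  have hXm : PadicInt.toZMod X = x0 := by
    rw [hX, map_natCast]; exact ZMod.natCast_rightInverse x0
  have hYm : PadicInt.toZMod Y = y0 := by
    rw [hY, map_natCast]; exact ZMod.natCast_rightInverse y0
  have hXnorm : ‖X‖ = 1 := by
    refine le_antisymm (PadicInt.norm_le_one _) ?_
    by_contra hlt
    push_neg at hlt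
    exact hx0 (hXm ▸ (toZMod_zero_iff X).mpr hlt)
  obtain ⟨x, hx⟩ := keyp hp c X (m - d * Y ^ 2) hc hXnorm (by
    rw [map_sub, map_sub, map_mul, map_mul, map_pow, map_pow, hXm, hYm]
    rw [← heq]; ring)
  exact ⟨x, Y, by rw [hx]; ring⟩

/-- For odd `p`, a binary diagonal form with unit coefficients represents all units. -/
lemma bin {p : ℕ} [Fact p.Prime] (hp : p ≠ 2) (c d m : ℤ_[p]) (hc : ‖c‖ = 1) (hd : ‖d‖ = 1)
    (hm : ‖m‖ = 1) : ∃ x y : ℤ_[p], c * x ^ 2 + d * y ^ 2 = m := by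
  have hcard : Fintype.card (ZMod p) % 2 = 1 := by
    rw [ZMod.card]
    exact Nat.odd_iff.mp ((Fact.out : p.Prime).odd_of_ne_two hp)
  have hcne : PadicInt.toZMod c ≠ 0 := by
    rw [Ne, toZMod_zero_iff, hc]; norm_num
  have hdne : PadicInt.toZMod d ≠ 0 := by
    rw [Ne, toZMod_zero_iff, hd]; norm_num
  have hmne : PadicInt.toZMod m ≠ 0 := by
    rw [Ne, toZMod_zero_iff, hm]; norm_num
  obtain ⟨x0, y0, hxy⟩ := FiniteField.exists_root_sum_quadratic
    (f := Polynomial.C (PadicInt.toZMod c) * Polynomial.X ^ 2)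
    (g := Polynomial.C (PadicInt.toZMod d) * Polynomial.X ^ 2 - Polynomial.C (PadicInt.toZMod m))
    (Polynomial.degree_C_mul_X_pow 2 hcne)
    (by
      rw [Polynomial.degree_sub_C]
      · exact Polynomial.degree_C_mul_X_pow 2 hdne
      · rw [Polynomial.degree_C_mul_X_pow 2 hdne]; norm_num)
    hcard
  simp only [Polynomial.eval_mul, Polynomial.eval_pow, Polynomial.eval_C, Polynomial.eval_X,
    Polynomial.eval_sub] at hxy
  have heq : PadicInt.toZMod c * x0 ^ 2 + PadicInt.toZMod d * y0 ^ 2 = PadicInt.toZMod m := by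
    linear_combination hxy
  by_cases hx0 : x0 = 0
  · have hy0 : y0 ≠ 0 := by
      intro hy0
      rw [hx0, hy0] at heq
      simp at heq
      exact hmne heq.symm
    obtain ⟨x, y, hxy2⟩ := binAux hp d c m hd y0 x0 hy0 (by linear_combination heq)
    exact ⟨y, x, by linear_combination hxy2⟩
  · exact binAux hp c d m hc x0 y0 hx0 heq

/-- Assemble a representation from integer values at all coordinates except `i`, and a p-adic
value at coordinate `i`. -/
lemma assemble {p : ℕ} [Fact p.Prime] (a x : Fin 5 → ℤ) (i : Fin 5) (n : ℤ) (y : ℤ_[p])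
    (hy : (a i : ℤ_[p]) * y ^ 2
        = ((n - ∑ j ∈ Finset.univ.erase i, a j * x j ^ 2 : ℤ) : ℤ_[p])) :
    ∃ Y : Fin 5 → ℤ_[p], ∑ j, (a j : ℤ_[p]) * (Y j) ^ 2 = ((n : ℤ) : ℤ_[p]) := by
  refine ⟨Function.update (fun j => ((x j : ℤ) : ℤ_[p])) i y, ?_⟩
  rw [← Finset.add_sum_erase _ _ (Finset.mem_univ i)]
  rw [Function.update_self]
  have : ∀ j ∈ Finset.univ.erase i,
      (a j : ℤ_[p]) * (Function.update (fun j => ((x j : ℤ) : ℤ_[p])) i y j) ^ 2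
        = (a j : ℤ_[p]) * ((x j : ℤ) : ℤ_[p]) ^ 2 := by
    intro j hj
    rw [Function.update_of_ne (Finset.ne_of_mem_erase hj)]
  rw [Finset.sum_congr rfl this, hy]
  have : (∑ j ∈ Finset.univ.erase i, (a j : ℤ_[p]) * ((x j : ℤ) : ℤ_[p]) ^ 2)
      = ((∑ j ∈ Finset.univ.erase i, a j * x j ^ 2 : ℤ) : ℤ_[p]) := by
    push_cast; rfl
  rw [this]
  push_cast
  ring

/-- Bridge: an approximate integer solution with designated coordinate `i` (where `x i = 1`)
yields an exact `ℤ_[2]` solution. -/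
lemma bridge (a x : Fin 5 → ℤ) (i : Fin 5) (n : ℤ) (hxi : x i = 1)
    (h : (¬ (2:ℤ) ∣ a i ∧ (8:ℤ) ∣ (∑ j, a j * x j ^ 2) - n) ∨
         (a i % 4 = 2 ∧ (16:ℤ) ∣ (∑ j, a j * x j ^ 2) - n)) :
    ∃ Y : Fin 5 → ℤ_[2], ∑ j, (a j : ℤ_[2]) * (Y j) ^ 2 = ((n : ℤ) : ℤ_[2]) := by
  set R : ℤ := ∑ j ∈ Finset.univ.erase i, a j * x j ^ 2 with hR
  have hS : (∑ j, a j * x j ^ 2) = a i + R := by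
    rw [hR, ← Finset.add_sum_erase _ _ (Finset.mem_univ i), hxi]
    ring
  rw [hS] at h
  rcases h with ⟨hodd, hdvd⟩ | ⟨hmod, hdvd⟩
  · obtain ⟨y, hy⟩ := key2 (a i) (n - R) hodd (by omega)
    exact assemble a x i n y hy
  · obtain ⟨k, hk⟩ : ∃ k, n - (a i + R) = 16 * k := hdvd.elim fun k hk => ⟨-k, by omega⟩
    set u : ℤ := a i / 2 with hu
    have hai : a i = 2 * u := by omega
    have huodd : ¬ (2:ℤ) ∣ u := by omega
    obtain ⟨y, hy⟩ := key2 u (u + 8 * k) huodd (by ring_nf; omega)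
    refine assemble a x i n y ?_
    have h2 : ((n - R : ℤ) : ℤ_[2]) = ((2 * (u + 8 * k) : ℤ) : ℤ_[2]) := by
      norm_cast
      omega
    rw [h2, hai]
    push_cast at hy ⊢
    rw [mul_assoc, hy]

/-- for any escalation tuple `(a₁,…,a₅)` (i.e. `a₁ = 1` and
`aᵢ ≤ a_{i+1} ≤ a₁+⋯+aᵢ+1` for `i = 1,…,4`), the diagonal quadratic form
`a₁y₁² + ⋯ + a₅y₅²` represents every positive integer over `ℤ_p` for every prime `p`. -/
theorem stmt16 (a : Fin 5 → ℤ) (ha : ∀ i, 0 < a i) (h0 : a 0 = 1)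
    (hchain : ∀ i : Fin 4,
      a i.castSucc ≤ a i.succ ∧
      a i.succ ≤ (∑ j ∈ Finset.univ.filter (fun j => j ≤ i.castSucc), a j) + 1) :
    ∀ (p : ℕ) [Fact p.Prime], ∀ N : ℤ, 0 < N →
      ∃ y : Fin 5 → ℤ_[p], ∑ i, (a i : ℤ_[p]) * (y i) ^ 2 = (N : ℤ_[p]) := by
  -- extract integer chain facts
  have e0 : Finset.univ.filter (fun j : Fin 5 => j ≤ (0 : Fin 4).castSucc) = {0} := by decide
  have e1 : Finset.univ.filter (fun j : Fin 5 => j ≤ (1 : Fin 4).castSucc) = {0, 1} := by decide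
  have e2 : Finset.univ.filter (fun j : Fin 5 => j ≤ (2 : Fin 4).castSucc) = {0, 1, 2} := by
    decide
  have e3 : Finset.univ.filter (fun j : Fin 5 => j ≤ (3 : Fin 4).castSucc) = {0, 1, 2, 3} := by
    decide
  have hc1 := hchain 0
  have hc2 := hchain 1
  have hc3 := hchain 2
  have hc4 := hchain 3
  rw [e0] at hc1; rw [e1] at hc2; rw [e2] at hc3; rw [e3] at hc4
  simp [Finset.sum_insert, Finset.mem_insert, Finset.sum_singleton,
    show ((0:Fin 4).succ : Fin 5) = 1 from rfl, show ((1:Fin 4).succ : Fin 5) = 2 from rfl,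
    show ((2:Fin 4).succ : Fin 5) = 3 from rfl, show ((3:Fin 4).succ : Fin 5) = 4 from rfl,
    show ((0:Fin 4).castSucc : Fin 5) = 0 from rfl, show ((1:Fin 4).castSucc : Fin 5) = 1 from rfl,
    show ((2:Fin 4).castSucc : Fin 5) = 2 from rfl, show ((3:Fin 4).castSucc : Fin 5) = 3 from rfl]
    at hc1 hc2 hc3 hc4
  intro p hpf N hN
  have pp : p.Prime := Fact.out
  obtain ⟨n, hn, rfl⟩ : ∃ n : ℕ, 0 < n ∧ N = (n : ℤ) :=
    ⟨N.toNat, by omega, by omega⟩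
  clear hN
  induction n using Nat.strong_induction_on with
  | _ n IH =>
  by_cases hsq4 : p ^ 2 ∣ n
  · -- divide by p²
    obtain ⟨m, rfl⟩ := hsq4
    have hm : 0 < m := by
      rcases Nat.eq_zero_or_pos m with h | h
      · subst h; simp at hn
      · exact h
    have hmlt : m < p ^ 2 * m := by
      have h2 := pp.two_le
      have h4 : 4 ≤ p ^ 2 := by nlinarith
      calc m < 4 * m := by omega
        _ ≤ p ^ 2 * m := Nat.mul_le_mul_right m h4
    obtain ⟨y, hy⟩ := IH m hmlt hm
    refine ⟨fun i => (p : ℤ_[p]) * y i, ?_⟩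
    have : ∀ i : Fin 5, (a i : ℤ_[p]) * ((p : ℤ_[p]) * y i) ^ 2
        = (p : ℤ_[p]) ^ 2 * ((a i : ℤ_[p]) * (y i) ^ 2) := by intro i; ring
    rw [Finset.sum_congr rfl fun i _ => this i, ← Finset.mul_sum, hy]
    push_cast
    ring
  · by_cases hp2 : p = 2
    · -- p = 2
      subst hp2
      set r : ℤ := (n : ℤ) % 16 with hr
      have h4n : ¬ (4:ℤ) ∣ (n : ℤ) := by
        rw [show (4:ℤ) = ((4:ℕ) : ℤ) from rfl, Int.natCast_dvd_natCast]
        simpa using hsq4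
      have hrmem : r ∈ ([1,2,3,5,6,7,9,10,11,13,14,15] : List ℤ) := by
        simp only [List.mem_cons, List.not_mem_nil, or_false]
        omega
      have hgood := fin_main (a 1) (a 2) (a 3) (a 4) (by omega) (by omega) (by omega)
        (by omega) (by omega) (by omega) (by omega) (by omega) r hrmem
      have h16 : (16:ℤ) ∣ (n : ℤ) - r := by omega
      rcases hgood with ⟨x0, -, x1, -, x2, -, x3, -, hcase⟩ | ⟨hmod4, x0, -, x3, -, x4, -, hdvd⟩
      · rcases hcase with ⟨hx0, hodd, hdvd⟩ | ⟨hx2, hodd, hdvd⟩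
        · refine bridge a ![x0, x1, x2, x3, 0] 0 (n : ℤ) (by simpa using hx0) (Or.inl ⟨?_, ?_⟩)
          · rw [h0]; decide
          · rw [Fin.sum_univ_five]
            simp only [Matrix.cons_val_zero, Matrix.cons_val_one, Matrix.head_cons,
              Matrix.cons_val_two, Matrix.tail_cons, Matrix.cons_val_three,
              Matrix.cons_val_four, h0]
            omega
        · refine bridge a ![x0, x1, x2, x3, 0] 2 (n : ℤ) (by simpa using hx2) (Or.inl ⟨?_, ?_⟩)
          · simpa using hodd
          · rw [Fin.sum_univ_five]
            simp only [Matrix.cons_val_zero, Matrix.cons_val_one, Matrix.head_cons,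
              Matrix.cons_val_two, Matrix.tail_cons, Matrix.cons_val_three,
              Matrix.cons_val_four, h0]
            omega
      · refine bridge a ![x0, 1, 0, x3, x4] 1 (n : ℤ) (by simp) (Or.inr ⟨by simpa using hmod4, ?_⟩)
        · rw [Fin.sum_univ_five]
          simp only [Matrix.cons_val_zero, Matrix.cons_val_one, Matrix.head_cons,
            Matrix.cons_val_two, Matrix.tail_cons, Matrix.cons_val_three,
            Matrix.cons_val_four, h0]
          omega
    · -- p odd
      have hp3 : 3 ≤ p := by
        have := pp.two_le
        omega
      have hna1 : ¬ (p:ℤ) ∣ a 1 := fun hdvd => by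
        have := Int.le_of_dvd (ha 1) hdvd
        omega
      have hna0 : ¬ (p:ℤ) ∣ a 0 := fun hdvd => by
        have := Int.le_of_dvd (ha 0) hdvd
        omega
      by_cases hdn : (p:ℤ) ∣ (n:ℤ)
      · -- v_p(n) = 1
        have hnp2 : ¬ ((p:ℤ)*(p:ℤ)) ∣ (n:ℤ) := by
          intro hp2d
          apply hsq4
          have : ((p^2 : ℕ) : ℤ) ∣ ((n:ℕ):ℤ) := by push_cast; convert hp2d using 1; ring
          exact_mod_cast this
        by_cases h2d : (p:ℤ) ∣ a 2
        · -- p = 3, a 2 = 3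
          have hple : (p:ℤ) ≤ a 2 := Int.le_of_dvd (ha 2) h2d
          have hpu : p ≤ 4 := by omega
          have hp3' : p = 3 := by
            interval_cases p
            · rfl
            · exact absurd pp (by norm_num)
          subst hp3'
          have ha2 : a 2 = 3 := by omega
          by_cases h3d : (3:ℤ) ∣ a 3
          · obtain ⟨v, hv, hv12⟩ : ∃ v:ℤ, a 3 = 3*v ∧ (v = 1 ∨ v = 2) := by
              refine ⟨a 3 / 3, by omega, by omega⟩
            obtain ⟨m, rfl⟩ : ∃ m : ℕ, n = 3 * m := by
              have : (3:ℕ) ∣ n := by exact_mod_cast hdn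
              exact this
            have hnm : ¬ (3:ℤ) ∣ (m:ℤ) := by
              intro hd
              apply hnp2
              push_cast
              exact mul_dvd_mul_left 3 hd
            obtain ⟨x, y, hxy⟩ := bin hp2 ((1:ℤ) : ℤ_[3]) ((v:ℤ) : ℤ_[3]) ((m:ℤ) : ℤ_[3])
              (norm_int_eq_one (by omega)) (norm_int_eq_one (by omega)) (norm_int_eq_one hnm)
            refine ⟨![0, 0, x, y, 0], ?_⟩
            rw [Fin.sum_univ_five]
            simp only [Matrix.cons_val_zero, Matrix.cons_val_one, Matrix.head_cons,
              Matrix.cons_val_two, Matrix.tail_cons, Matrix.cons_val_three,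
              Matrix.cons_val_four, ha2, hv]
            push_cast at hxy ⊢
            linear_combination (3:ℤ_[3]) * hxy
          · -- use coordinate 3
            have hm3 : ¬ (3:ℤ) ∣ ((n:ℤ) - a 3) := by
              intro hd
              exact h3d (by omega)
            obtain ⟨x, y, hxy⟩ := bin hp2 ((a 0 : ℤ) : ℤ_[3]) ((a 1 : ℤ) : ℤ_[3])
              (((n:ℤ) - a 3 : ℤ) : ℤ_[3])
              (norm_int_eq_one hna0) (norm_int_eq_one hna1) (norm_int_eq_one hm3)
            refine ⟨![x, y, 0, 1, 0], ?_⟩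
            rw [Fin.sum_univ_five]
            simp only [Matrix.cons_val_zero, Matrix.cons_val_one, Matrix.head_cons,
              Matrix.cons_val_two, Matrix.tail_cons, Matrix.cons_val_three,
              Matrix.cons_val_four]
            push_cast at hxy ⊢
            linear_combination hxy
        · -- use coordinate 2
          have hm2 : ¬ (p:ℤ) ∣ ((n:ℤ) - a 2) := by
            intro hd
            have : (p:ℤ) ∣ ((n:ℤ) - ((n:ℤ) - a 2)) := dvd_sub hdn hd
            exact h2d (by simpa using this)
          obtain ⟨x, y, hxy⟩ := bin hp2 ((a 0 : ℤ) : ℤ_[p]) ((a 1 : ℤ) : ℤ_[p])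
            (((n:ℤ) - a 2 : ℤ) : ℤ_[p])
            (norm_int_eq_one hna0) (norm_int_eq_one hna1) (norm_int_eq_one hm2)
          refine ⟨![x, y, 1, 0, 0], ?_⟩
          rw [Fin.sum_univ_five]
          simp only [Matrix.cons_val_zero, Matrix.cons_val_one, Matrix.head_cons,
            Matrix.cons_val_two, Matrix.tail_cons, Matrix.cons_val_three,
            Matrix.cons_val_four]
          push_cast at hxy ⊢
          linear_combination hxy
      · -- n is a p-adic unit
        obtain ⟨x, y, hxy⟩ := bin hp2 ((a 0 : ℤ) : ℤ_[p]) ((a 1 : ℤ) : ℤ_[p]) (((n:ℕ):ℤ) : ℤ_[p])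
          (norm_int_eq_one hna0) (norm_int_eq_one hna1) (norm_int_eq_one hdn)
        refine ⟨![x, y, 0, 0, 0], ?_⟩
        rw [Fin.sum_univ_five]
        simp only [Matrix.cons_val_zero, Matrix.cons_val_one, Matrix.head_cons,
          Matrix.cons_val_two, Matrix.tail_cons, Matrix.cons_val_three,
          Matrix.cons_val_four]
        push_cast at hxy ⊢
        linear_combination hxy
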